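/- arXiv:1809.10864 — 3 statements merged into one kernel-verified Lean document; each statement's English description precedes it below -/
import Mathlib

section
/- Let α ∈ (1,2) and β ∈ [−1,1]. Define the operator L f(x) = d_α ∫_ℝ (f(x+y) − f(x) − y f'(x)) / (2|y|^{1+α}) · ((1+β)·1_{y>0} + (1−β)·1_{y<0}) dy, where d_α = (∫_0^∞ (1−cos y)/y^{1+α} dy)^{−1}. Then for every f ∈ C_b^3(ℝ) and all x, z ∈ ℝ, |Lf(x+z) − Lf(x)| ≤ D_α |z| with D_α = 2 d_α ‖f''‖_∞/(α−1) + d_α ‖f'''‖_∞ / (2(2−α)). -/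
open MeasureTheory Set

/-- Normalizing constant `d_α = (∫_0^∞ (1 - cos y)/y^{1+α} dy)⁻¹`. -/
noncomputable def dcoef (α : ℝ) : ℝ :=
  (∫ y in Set.Ioi (0:ℝ), (1 - Real.cos y) / y ^ (1 + α))⁻¹

/-- Asymmetric fractional generator for `α ∈ (1,2)` (compensator `y`). -/
noncomputable def Lop (α β : ℝ) (f : ℝ → ℝ) (x : ℝ) : ℝ :=
  dcoef α * ∫ y : ℝ, (f (x + y) - f x - y * deriv f x) / (2 * |y| ^ (1 + α)) *
    ((1 + β) * Set.indicator (Set.Ioi (0:ℝ)) 1 y + (1 - β) * Set.indicator (Set.Iio (0:ℝ)) 1 y)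

/-- The asymmetric weight. -/
noncomputable def Wfun (β : ℝ) (y : ℝ) : ℝ :=
  (1 + β) * Set.indicator (Set.Ioi (0:ℝ)) 1 y + (1 - β) * Set.indicator (Set.Iio (0:ℝ)) 1 y

/-- The comparison kernel. -/
noncomputable def Gmin (α A B : ℝ) (y : ℝ) : ℝ :=
  min (A * y ^ 2) (B * |y|) / |y| ^ (1 + α)

lemma div_mono_num {a b c : ℝ} (h : a ≤ b) (hc : 0 ≤ c) : a / c ≤ b / c := by
  rw [div_eq_mul_inv, div_eq_mul_inv]
  exact mul_le_mul_of_nonneg_right h (inv_nonneg.2 hc)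

lemma dcoef_nonneg (α : ℝ) : 0 ≤ dcoef α := by
  unfold dcoef
  apply inv_nonneg.2
  apply setIntegral_nonneg measurableSet_Ioi
  intro y hy
  have h1 : (0:ℝ) ≤ 1 - Real.cos y := by nlinarith [Real.cos_le_one y]
  have h2 : (0:ℝ) ≤ y ^ (1 + α) := Real.rpow_nonneg (le_of_lt hy) _
  positivity

lemma Wfun_nonneg {β : ℝ} (hβ : -1 ≤ β ∧ β ≤ 1) (y : ℝ) : 0 ≤ Wfun β y := by
  unfold Wfun
  have h1 : (0:ℝ) ≤ Set.indicator (Set.Ioi (0:ℝ)) 1 y := by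
    apply Set.indicator_nonneg; intro a _; norm_num
  have h2 : (0:ℝ) ≤ Set.indicator (Set.Iio (0:ℝ)) 1 y := by
    apply Set.indicator_nonneg; intro a _; norm_num
  have p1 : (0:ℝ) ≤ (1 + β) * Set.indicator (Set.Ioi (0:ℝ)) 1 y :=
    mul_nonneg (by linarith [hβ.1]) h1
  have p2 : (0:ℝ) ≤ (1 - β) * Set.indicator (Set.Iio (0:ℝ)) 1 y :=
    mul_nonneg (by linarith [hβ.2]) h2
  linarith

lemma Wfun_le_two {β : ℝ} (hβ : -1 ≤ β ∧ β ≤ 1) (y : ℝ) : Wfun β y ≤ 2 := by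
  unfold Wfun
  rcases le_or_gt y 0 with hy | hy
  · have h1 : Set.indicator (Set.Ioi (0:ℝ)) (1 : ℝ → ℝ) y = 0 :=
      Set.indicator_of_notMem (by simpa using hy) _
    have h2 : Set.indicator (Set.Iio (0:ℝ)) (1 : ℝ → ℝ) y ≤ 1 := by
      rcases lt_or_ge y 0 with h | h
      · rw [Set.indicator_of_mem (by simpa using h)]; norm_num
      · rw [Set.indicator_of_notMem (by simpa using h)]; norm_num
    have h2' : (0:ℝ) ≤ Set.indicator (Set.Iio (0:ℝ)) 1 y :=
      Set.indicator_nonneg (fun a _ => by norm_num) _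
    nlinarith [hβ.1, hβ.2]
  · have h1 : Set.indicator (Set.Iio (0:ℝ)) (1 : ℝ → ℝ) y = 0 :=
      Set.indicator_of_notMem (by simpa using hy.le) _
    have h2 : Set.indicator (Set.Ioi (0:ℝ)) (1 : ℝ → ℝ) y = 1 :=
      Set.indicator_of_mem (by simpa using hy) _
    rw [h1, h2]
    nlinarith [hβ.1, hβ.2]

lemma Wfun_measurable (β : ℝ) : Measurable (Wfun β) := by
  unfold Wfun
  exact ((measurable_const.indicator measurableSet_Ioi).const_mul _).add
    ((measurable_const.indicator measurableSet_Iio).const_mul _)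

lemma Wfun_pos_eval {β y : ℝ} (hy : 0 < y) : Wfun β y = 1 + β := by
  unfold Wfun
  rw [Set.indicator_of_mem (by simpa using hy), Set.indicator_of_notMem (by simpa using hy.le)]
  simp

lemma Wfun_neg_eval {β y : ℝ} (hy : y < 0) : Wfun β y = 1 - β := by
  unfold Wfun
  rw [Set.indicator_of_notMem (by simpa using hy.le), Set.indicator_of_mem (by simpa using hy)]
  simp

lemma Gmin_even (α A B y : ℝ) : Gmin α A B (-y) = Gmin α A B y := by
  unfold Gmin; rw [abs_neg, neg_pow]; ring_nf

lemma Gmin_nonneg {A B : ℝ} (hA : 0 ≤ A) (hB : 0 ≤ B) (α y : ℝ) : 0 ≤ Gmin α A B y := by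
  unfold Gmin
  apply div_nonneg
  · exact le_min (by positivity) (by positivity)
  · exact Real.rpow_nonneg (abs_nonneg _) _

lemma Gmin_measurable (α A B : ℝ) : Measurable (Gmin α A B) := by
  unfold Gmin
  apply Measurable.div
  · exact ((measurable_id.pow_const 2).const_mul A).min ((measurable_abs).const_mul B)
  · exact measurable_abs.pow_const _

lemma integrableOn_Ioi_Gmin {α A B : ℝ} (hα1 : 1 < α) (hα2 : α < 2) (hA : 0 ≤ A) (hB : 0 ≤ B) :
    IntegrableOn (Gmin α A B) (Ioi (0:ℝ)) := by
  rw [← Ioc_union_Ioi_eq_Ioi (zero_le_one' ℝ), integrableOn_union]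
  constructor
  · refine Integrable.mono' (g := fun y => A * y ^ (1 - α))
      ((intervalIntegral.intervalIntegrable_rpow' (by linarith : (-1:ℝ) < 1 - α)).1.const_mul A)
      ((Gmin_measurable α A B).aestronglyMeasurable) ?_
    rw [ae_restrict_iff' measurableSet_Ioc]
    refine Filter.Eventually.of_forall fun y hy => ?_
    have hy0 : 0 < y := hy.1
    have habs : |y| = y := abs_of_pos hy0
    have hpow : (0:ℝ) < y ^ (1 + α) := Real.rpow_pos_of_pos hy0 _
    rw [Real.norm_eq_abs, abs_of_nonneg (Gmin_nonneg hA hB α y)]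
    unfold Gmin
    rw [habs]
    have key : y ^ (2:ℕ) / y ^ (1 + α) = y ^ (1 - α) := by
      rw [← Real.rpow_natCast y 2, ← Real.rpow_sub hy0]
      congr 1; ring
    calc min (A * y ^ 2) (B * y) / y ^ (1 + α) ≤ (A * y ^ 2) / y ^ (1 + α) := by
          exact div_mono_num (min_le_left _ _) hpow.le
      _ = A * (y ^ (2:ℕ) / y ^ (1 + α)) := by rw [mul_div_assoc]
      _ = A * y ^ (1 - α) := by rw [key]
  · refine Integrable.mono' (g := fun y => B * y ^ (-α))
      ((integrableOn_Ioi_rpow_of_lt (by linarith : -α < -1) one_pos).const_mul B)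
      ((Gmin_measurable α A B).aestronglyMeasurable) ?_
    rw [ae_restrict_iff' measurableSet_Ioi]
    refine Filter.Eventually.of_forall fun y hy => ?_
    have hy0 : (0:ℝ) < y := lt_trans one_pos hy
    have habs : |y| = y := abs_of_pos hy0
    have hpow : (0:ℝ) < y ^ (1 + α) := Real.rpow_pos_of_pos hy0 _
    rw [Real.norm_eq_abs, abs_of_nonneg (Gmin_nonneg hA hB α y)]
    unfold Gmin
    rw [habs]
    have key : y ^ (1:ℝ) / y ^ (1 + α) = y ^ (-α) := by
      rw [← Real.rpow_sub hy0]
      congr 1; ring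
    calc min (A * y ^ 2) (B * y) / y ^ (1 + α) ≤ (B * y) / y ^ (1 + α) := by
          exact div_mono_num (min_le_right _ _) hpow.le
      _ = B * (y ^ (1:ℝ) / y ^ (1 + α)) := by rw [Real.rpow_one, mul_div_assoc]
      _ = B * y ^ (-α) := by rw [key]

lemma integrableOn_Iio_of_even {G : ℝ → ℝ} (heven : ∀ y, G (-y) = G y)
    (hG : IntegrableOn G (Ioi (0:ℝ))) : IntegrableOn G (Iio (0:ℝ)) := by
  have h_map : (volume.restrict (Ioi (0:ℝ))).map Neg.neg = volume.restrict (Iio (0:ℝ)) := by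
    conv_rhs => rw [← Measure.map_neg_eq_self (volume : Measure ℝ),
      measurableEmbedding_neg.restrict_map]
    congr 1
    ext y
    simp [neg_lt_zero]
  rw [IntegrableOn, ← h_map, measurableEmbedding_neg.integrable_map_iff]
  have hfun : G ∘ Neg.neg = G := funext heven
  rw [hfun]
  exact hG

lemma integrable_of_even_Ioi {G : ℝ → ℝ} (heven : ∀ y, G (-y) = G y)
    (hG : IntegrableOn G (Ioi (0:ℝ))) : Integrable G := by
  have h2 : IntegrableOn G (Iio (0:ℝ) ∪ Ioi (0:ℝ)) :=
    (integrableOn_Iio_of_even heven hG).union hG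
  rw [← integrableOn_univ]
  apply h2.congr_set_ae
  rw [Iio_union_Ioi]
  symm
  rw [ae_eq_univ, compl_compl]
  exact measure_singleton 0

lemma setIntegral_Iio_of_even {G : ℝ → ℝ} (heven : ∀ y, G (-y) = G y) :
    ∫ y in Iio (0:ℝ), G y = ∫ y in Ioi (0:ℝ), G y := by
  have h1 : ∫ y in Iio (0:ℝ), G y = ∫ y in Iic (0:ℝ), G y :=
    setIntegral_congr_set Iio_ae_eq_Iic
  have h2 : ∫ y in Iic (0:ℝ), G (-y) = ∫ y in Ioi (-(0:ℝ)), G y :=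
    integral_comp_neg_Iic 0 G
  simp only [heven, neg_zero] at h2
  rw [h1, h2]

lemma integral_W_mul {β : ℝ} (hβ : -1 ≤ β ∧ β ≤ 1) {G : ℝ → ℝ}
    (hG : Integrable G) (heven : ∀ y, G (-y) = G y) :
    ∫ y, Wfun β y * G y = 2 * ∫ y in Ioi (0:ℝ), G y := by
  have hint : Integrable (fun y => Wfun β y * G y) := by
    refine hG.bdd_mul (Wfun_measurable β).aestronglyMeasurable (c := 2) (Filter.Eventually.of_forall fun y => ?_)
    rw [Real.norm_eq_abs, abs_of_nonneg (Wfun_nonneg hβ y)]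
    exact Wfun_le_two hβ y
  have hsplit := integral_add_compl (measurableSet_Ioi (a := (0:ℝ))) hint
  rw [compl_Ioi] at hsplit
  have e1 : ∫ y in Ioi (0:ℝ), Wfun β y * G y = (1 + β) * ∫ y in Ioi (0:ℝ), G y := by
    rw [← integral_const_mul]
    apply setIntegral_congr_fun measurableSet_Ioi
    intro y hy
    show Wfun β y * G y = (1 + β) * G y
    rw [Wfun_pos_eval (by exact hy)]
  have e2 : ∫ y in Iic (0:ℝ), Wfun β y * G y = (1 - β) * ∫ y in Ioi (0:ℝ), G y := by
    have s1 : ∫ y in Iic (0:ℝ), Wfun β y * G y = ∫ y in Iio (0:ℝ), Wfun β y * G y :=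
      (setIntegral_congr_set Iio_ae_eq_Iic).symm
    have s2 : ∫ y in Iio (0:ℝ), Wfun β y * G y = (1 - β) * ∫ y in Iio (0:ℝ), G y := by
      rw [← integral_const_mul]
      apply setIntegral_congr_fun measurableSet_Iio
      intro y hy
      show Wfun β y * G y = (1 - β) * G y
      rw [Wfun_neg_eval (by exact hy)]
    rw [s1, s2, setIntegral_Iio_of_even heven]
  rw [← hsplit, e1, e2]
  ring

lemma integral_Ioi_Gmin_le {α A B : ℝ} (hα1 : 1 < α) (hα2 : α < 2) (hA : 0 ≤ A) (hB : 0 ≤ B) :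
    ∫ y in Ioi (0:ℝ), Gmin α A B y ≤ A / (2 - α) + B / (α - 1) := by
  have hIoc : IntegrableOn (Gmin α A B) (Ioc (0:ℝ) 1) := by
    have := integrableOn_Ioi_Gmin hα1 hα2 hA hB
    exact this.mono_set (Ioc_subset_Ioi_self)
  have hIoi1 : IntegrableOn (Gmin α A B) (Ioi (1:ℝ)) := by
    have := integrableOn_Ioi_Gmin hα1 hα2 hA hB
    exact this.mono_set (Ioi_subset_Ioi zero_le_one)
  have hmaj1 : IntegrableOn (fun y => A * y ^ (1 - α)) (Ioc (0:ℝ) 1) :=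
    (intervalIntegral.intervalIntegrable_rpow' (by linarith : (-1:ℝ) < 1 - α)).1.const_mul A
  have hmaj2 : IntegrableOn (fun y => B * y ^ (-α)) (Ioi (1:ℝ)) :=
    (integrableOn_Ioi_rpow_of_lt (by linarith : -α < -1) one_pos).const_mul B
  have hsplit : ∫ y in Ioi (0:ℝ), Gmin α A B y
      = (∫ y in Ioc (0:ℝ) 1, Gmin α A B y) + ∫ y in Ioi (1:ℝ), Gmin α A B y := by
    rw [← setIntegral_union (Ioc_disjoint_Ioi le_rfl) measurableSet_Ioi hIoc hIoi1,
      Ioc_union_Ioi_eq_Ioi (zero_le_one' ℝ)]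
  rw [hsplit]
  have b1 : ∫ y in Ioc (0:ℝ) 1, Gmin α A B y ≤ A / (2 - α) := by
    have step : ∫ y in Ioc (0:ℝ) 1, Gmin α A B y ≤ ∫ y in Ioc (0:ℝ) 1, A * y ^ (1 - α) := by
      apply setIntegral_mono_on hIoc hmaj1 measurableSet_Ioc
      intro y hy
      have hy0 : 0 < y := hy.1
      have habs : |y| = y := abs_of_pos hy0
      have hpow : (0:ℝ) < y ^ (1 + α) := Real.rpow_pos_of_pos hy0 _
      unfold Gmin
      rw [habs]
      have key : y ^ (2:ℕ) / y ^ (1 + α) = y ^ (1 - α) := by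
        rw [← Real.rpow_natCast y 2, ← Real.rpow_sub hy0]
        congr 1; ring
      calc min (A * y ^ 2) (B * y) / y ^ (1 + α) ≤ (A * y ^ 2) / y ^ (1 + α) :=
            div_mono_num (min_le_left _ _) hpow.le
        _ = A * (y ^ (2:ℕ) / y ^ (1 + α)) := by rw [mul_div_assoc]
        _ = A * y ^ (1 - α) := by rw [key]
    refine step.trans ?_
    have hval : ∫ y in Ioc (0:ℝ) 1, y ^ (1 - α) = 1 / (2 - α) := by
      rw [← intervalIntegral.integral_of_le (zero_le_one' ℝ)]
      rw [integral_rpow (Or.inl (by linarith : (-1:ℝ) < 1 - α))]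
      rw [Real.one_rpow, Real.zero_rpow (by intro h; nlinarith : 1 - α + 1 ≠ 0)]
      have : 1 - α + 1 = 2 - α := by ring
      rw [this]
      ring
    rw [integral_const_mul, hval, mul_one_div]
  have b2 : ∫ y in Ioi (1:ℝ), Gmin α A B y ≤ B / (α - 1) := by
    have step : ∫ y in Ioi (1:ℝ), Gmin α A B y ≤ ∫ y in Ioi (1:ℝ), B * y ^ (-α) := by
      apply setIntegral_mono_on hIoi1 hmaj2 measurableSet_Ioi
      intro y hy
      have hy0 : (0:ℝ) < y := lt_trans one_pos hy
      have habs : |y| = y := abs_of_pos hy0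
      have hpow : (0:ℝ) < y ^ (1 + α) := Real.rpow_pos_of_pos hy0 _
      unfold Gmin
      rw [habs]
      have key : y ^ (1:ℝ) / y ^ (1 + α) = y ^ (-α) := by
        rw [← Real.rpow_sub hy0]; congr 1; ring
      calc min (A * y ^ 2) (B * y) / y ^ (1 + α) ≤ (B * y) / y ^ (1 + α) :=
            div_mono_num (min_le_right _ _) hpow.le
        _ = B * (y ^ (1:ℝ) / y ^ (1 + α)) := by rw [Real.rpow_one, mul_div_assoc]
        _ = B * y ^ (-α) := by rw [key]
    refine step.trans ?_
    have hval : ∫ y in Ioi (1:ℝ), y ^ (-α) = 1 / (α - 1) := by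
      rw [integral_Ioi_rpow_of_lt (by linarith : -α < -1) one_pos]
      rw [Real.one_rpow, show -α + 1 = -(α - 1) by ring, div_neg]
      simp [neg_div]
    rw [integral_const_mul, hval, mul_one_div]
  linarith


/-- Lipschitz bound from a global derivative bound. -/
lemma lipC {g : ℝ → ℝ} (hg : ContDiff ℝ 1 g) {C : ℝ} (hC : ∀ u, |deriv g u| ≤ C)
    (a b : ℝ) : |g b - g a| ≤ C * |b - a| := by
  have hder : Continuous (deriv g) := (hg.iterate_deriv' 0 1).continuous
  have h1 : ∫ t in a..b, deriv g t = g b - g a :=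
    intervalIntegral.integral_deriv_eq_sub (fun t _ => hg.differentiable one_ne_zero t)
      (hder.intervalIntegrable _ _)
  rw [← h1, ← Real.norm_eq_abs]
  exact intervalIntegral.norm_integral_le_of_norm_le_const
    (fun t _ => (Real.norm_eq_abs _) ▸ hC t)

/-- Second order Taylor bound. -/
lemma taylor2 {g : ℝ → ℝ} (hg : ContDiff ℝ 2 g) {C : ℝ}
    (hC : ∀ u, |deriv (deriv g) u| ≤ C) (a y : ℝ) :
    |g (a + y) - g a - y * deriv g a| ≤ C * y ^ 2 / 2 := by
  have hg1 : ContDiff ℝ 1 (deriv g) := (contDiff_succ_iff_deriv.mp hg).2.2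
  have hlip : ∀ t : ℝ, |deriv g (a + t) - deriv g a| ≤ C * |t| := by
    intro t
    have := lipC hg1 hC (a) (a + t)
    simpa using this
  have hder : Continuous (deriv g) := hg1.continuous
  -- FTC for g
  have h1 : ∫ t in (0:ℝ)..y, deriv g (a + t) = g (a + y) - g a := by
    have : ∫ t in (0:ℝ)..y, deriv g (a + t) = ∫ t in a..(a+y), deriv g t := by
      simpa using (intervalIntegral.integral_comp_add_left (fun t => deriv g t) a (a := 0) (b := y)).symm
    rw [this]
    exact intervalIntegral.integral_deriv_eq_sub (fun t _ => hg.differentiable two_ne_zero t)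
      (hder.intervalIntegrable _ _)
  have h2 : ∫ t in (0:ℝ)..y, deriv g a = y * deriv g a := by simp [mul_comm]
  have h3 : g (a + y) - g a - y * deriv g a
      = ∫ t in (0:ℝ)..y, (deriv g (a + t) - deriv g a) := by
    have hc : Continuous fun t => deriv g (a + t) :=
      hder.comp (continuous_const.add continuous_id)
    rw [intervalIntegral.integral_sub (hc.intervalIntegrable _ _)
      intervalIntegrable_const, h1, h2]
  rw [h3]
  have key : |∫ t in (0:ℝ)..y, (deriv g (a + t) - deriv g a)|
      ≤ abs (∫ t in (0:ℝ)..y, C * |t|) := by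
    rw [← Real.norm_eq_abs (∫ t in (0:ℝ)..y, _)]
    apply intervalIntegral.norm_integral_le_abs_of_norm_le
    · exact Filter.Eventually.of_forall fun t => by rw [Real.norm_eq_abs]; exact hlip t
    · exact (continuous_const.mul continuous_abs).intervalIntegrable _ _
  refine key.trans ?_
  have : ∫ t in (0:ℝ)..y, C * |t| = C * ∫ t in (0:ℝ)..y, |t| := by
    simp [intervalIntegral.integral_const_mul]
  rw [this]
  rcases le_or_gt 0 y with hy | hy
  · have : ∫ t in (0:ℝ)..y, |t| = y ^ 2 / 2 := by
      rw [intervalIntegral.integral_congr (g := fun t => t) ?_, integral_id]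
      · ring
      · intro t ht
        rw [uIcc_of_le hy] at ht
        exact abs_of_nonneg ht.1
    have hC0 : (0:ℝ) ≤ C := le_trans (abs_nonneg _) (hC 0)
    rw [this, abs_of_nonneg (by positivity)]
    ring_nf
    exact le_rfl
  · have : ∫ t in (0:ℝ)..y, |t| = -(y ^ 2 / 2) := by
      rw [intervalIntegral.integral_congr (g := fun t => -t) ?_]
      · rw [intervalIntegral.integral_neg, integral_id]; ring
      · intro t ht
        rw [uIcc_of_ge hy.le] at ht
        exact abs_of_nonpos ht.2
    rw [this]
    have hC0 : 0 ≤ C := le_trans (abs_nonneg _) (hC 0)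
    rw [abs_of_nonpos (by nlinarith [sq_nonneg y])]
    nlinarith [sq_nonneg y]

lemma lipD {g g' : ℝ → ℝ} (hg : ∀ u, HasDerivAt g (g' u) u) (hg' : Continuous g')
    {C : ℝ} (hC : ∀ u, |g' u| ≤ C) (a b : ℝ) : |g b - g a| ≤ C * |b - a| := by
  have h1 : ∫ t in a..b, g' t = g b - g a :=
    intervalIntegral.integral_eq_sub_of_hasDerivAt (fun t _ => hg t)
      (hg'.intervalIntegrable _ _)
  rw [← h1, ← Real.norm_eq_abs]
  exact intervalIntegral.norm_integral_le_of_norm_le_const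
    (fun t _ => (Real.norm_eq_abs _) ▸ hC t)

lemma bound_aux {n m d w : ℝ} (hn : |n| ≤ m) (hd : 0 ≤ d) (hw : 0 ≤ w) :
    |n / d * w| ≤ m / d * w := by
  rw [abs_mul, abs_div, abs_of_nonneg hd, abs_of_nonneg hw]
  exact mul_le_mul_of_nonneg_right (div_mono_num hn hd) hw

lemma bound_aux2 {n m d w : ℝ} (hn : |n| ≤ m) (hd : 0 ≤ d) (hw0 : 0 ≤ w) (hw2 : w ≤ 2) :
    |n / (2 * d) * w| ≤ m / d := by
  have hm : 0 ≤ m := (abs_nonneg n).trans hn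
  have h1 : |n / (2 * d) * w| ≤ m / (2 * d) * w := bound_aux hn (by positivity) hw0
  refine h1.trans ?_
  have h2 : m / (2 * d) * w ≤ m / (2 * d) * 2 :=
    mul_le_mul_of_nonneg_left hw2 (by positivity)
  refine h2.trans (le_of_eq ?_)
  rcases eq_or_ne d 0 with h | h
  · simp [h]
  · field_simp

/-- Lipschitz estimate for `L f` when `α ∈ (1,2)`. -/
theorem Lop_lipschitz (α β : ℝ) (hα : α ∈ Set.Ioo (1:ℝ) 2) (hβ : β ∈ Set.Icc (-1:ℝ) 1)
    (f : ℝ → ℝ) (hf : ContDiff ℝ 3 f)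
    (M0 M1 M2 M3 : ℝ)
    (h0 : ∀ x, |f x| ≤ M0) (h1 : ∀ x, |deriv f x| ≤ M1)
    (h2 : ∀ x, |deriv (deriv f) x| ≤ M2) (h3 : ∀ x, |deriv (deriv (deriv f)) x| ≤ M3)
    (x z : ℝ) :
    |Lop α β f (x + z) - Lop α β f x| ≤
      (2 * dcoef α * M2 / (α - 1) + dcoef α * M3 / (2 * (2 - α))) * |z| := by
  obtain ⟨hα1, hα2⟩ := hα
  obtain ⟨hβ1, hβ2⟩ := hβ
  have hβ' : -1 ≤ β ∧ β ≤ 1 := ⟨hβ1, hβ2⟩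
  have hM1 : 0 ≤ M1 := (abs_nonneg _).trans (h1 0)
  have hM2 : 0 ≤ M2 := (abs_nonneg _).trans (h2 0)
  have hM3 : 0 ≤ M3 := (abs_nonneg _).trans (h3 0)
  have hf2 : ContDiff ℝ 2 f := hf.of_le (by norm_num)
  have hf1 : ContDiff ℝ 1 f := hf.of_le (by norm_num)
  have hf' : ContDiff ℝ 2 (deriv f) := (contDiff_succ_iff_deriv.mp hf).2.2
  have hf'1 : ContDiff ℝ 1 (deriv f) := hf'.of_le (by norm_num)
  have hf'' : ContDiff ℝ 1 (deriv (deriv f)) := (contDiff_succ_iff_deriv.mp hf').2.2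
  have hfd : Differentiable ℝ f := hf1.differentiable one_ne_zero
  have hfd' : Differentiable ℝ (deriv f) := hf'1.differentiable one_ne_zero
  set F : ℝ → ℝ → ℝ := fun u y =>
    (f (u + y) - f u - y * deriv f u) / (2 * |y| ^ (1 + α)) * Wfun β y with hFdef
  have hLop : ∀ u, Lop α β f u = dcoef α * ∫ y, F u y := fun u => rfl
  -- measurability
  have hFmeas : ∀ u, AEStronglyMeasurable (F u) volume := by
    intro u
    apply Measurable.aestronglyMeasurable
    apply Measurable.mul ?_ (Wfun_measurable β)
    apply Measurable.div
    · have hfc : Continuous f := hf.continuous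
      have : Continuous fun y : ℝ => f (u + y) - f u - y * deriv f u := by
        apply Continuous.sub
        · apply Continuous.sub
          · exact hfc.comp (continuous_const.add continuous_id)
          · exact continuous_const
        · exact continuous_id.mul continuous_const
      exact this.measurable
    · exact ((measurable_abs.pow_const _).const_mul 2)
  -- numerator bound for integrability
  have hnum : ∀ u y, |f (u + y) - f u - y * deriv f u|
      ≤ min (M2 / 2 * y ^ 2) (2 * M1 * |y|) := by
    intro u y
    refine le_min ?_ ?_
    · have ht := taylor2 hf2 h2 u y
      calc |f (u + y) - f u - y * deriv f u| ≤ M2 * y ^ 2 / 2 := ht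
        _ = M2 / 2 * y ^ 2 := by ring
    · have hl := lipC hf1 h1 u (u + y)
      have hl' : |f (u + y) - f u| ≤ M1 * |y| := by simpa using hl
      have hy : |y * deriv f u| ≤ |y| * M1 := by
        rw [abs_mul]
        exact mul_le_mul_of_nonneg_left (h1 u) (abs_nonneg y)
      calc |f (u + y) - f u - y * deriv f u|
          ≤ |f (u + y) - f u| + |y * deriv f u| := by
            rw [← Real.norm_eq_abs]; exact (norm_sub_le _ _)
        _ ≤ M1 * |y| + |y| * M1 := add_le_add hl' hy
        _ = 2 * M1 * |y| := by ring
  -- integrability of F u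
  have hFint : ∀ u, Integrable (F u) := by
    intro u
    refine Integrable.mono'
      (integrable_of_even_Ioi (Gmin_even α (M2 / 2) (2 * M1))
        (integrableOn_Ioi_Gmin hα1 hα2 (by positivity) (by positivity)))
      (hFmeas u) (Filter.Eventually.of_forall fun y => ?_)
    rw [Real.norm_eq_abs]
    exact bound_aux2 (hnum u y) (Real.rpow_nonneg (abs_nonneg y) _)
      (Wfun_nonneg hβ' y) (Wfun_le_two hβ' y)
  set GG : ℝ → ℝ := Gmin α (M3 / 2) (2 * M2) with hGGdef
  -- pointwise bound on the difference
  have hΔ : ∀ y, |F (x + z) y - F x y| ≤ |z| * (Wfun β y * GG y) / 2 := by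
    intro y
    set gy : ℝ → ℝ := fun u => f (u + y) - f u - y * deriv f u with hgy
    set gy' : ℝ → ℝ := fun u => deriv f (u + y) - deriv f u - y * deriv (deriv f) u with hgy'
    have hder : ∀ u, HasDerivAt gy (gy' u) u := by
      intro u
      have a1 : HasDerivAt (fun v => f (v + y)) (deriv f (u + y)) u :=
        HasDerivAt.comp_add_const u y ((hfd (u + y)).hasDerivAt)
      have a2 : HasDerivAt f (deriv f u) u := (hfd u).hasDerivAt
      have a3 : HasDerivAt (fun v => y * deriv f v) (y * deriv (deriv f) u) u :=
        ((hfd' u).hasDerivAt).const_mul y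
      exact (a1.sub a2).sub a3
    have hcont : Continuous gy' :=
      ((hf'1.continuous.comp (continuous_id.add continuous_const)).sub
        hf'1.continuous).sub (continuous_const.mul hf''.continuous)
    have hbound : ∀ u, |gy' u| ≤ min (M3 / 2 * y ^ 2) (2 * M2 * |y|) := by
      intro u
      refine le_min ?_ ?_
      · have ht := taylor2 hf' h3 u y
        calc |gy' u| ≤ M3 * y ^ 2 / 2 := ht
          _ = M3 / 2 * y ^ 2 := by ring
      · have hl := lipC hf'1 h2 u (u + y)
        have hl' : |deriv f (u + y) - deriv f u| ≤ M2 * |y| := by simpa using hl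
        have hy : |y * deriv (deriv f) u| ≤ |y| * M2 := by
          rw [abs_mul]
          exact mul_le_mul_of_nonneg_left (h2 u) (abs_nonneg y)
        calc |gy' u| ≤ |deriv f (u + y) - deriv f u| + |y * deriv (deriv f) u| := by
              rw [← Real.norm_eq_abs]; exact (norm_sub_le _ _)
          _ ≤ M2 * |y| + |y| * M2 := add_le_add hl' hy
          _ = 2 * M2 * |y| := by ring
    have hlip := lipD hder hcont hbound x (x + z)
    have hlip' : |gy (x + z) - gy x| ≤ min (M3 / 2 * y ^ 2) (2 * M2 * |y|) * |z| := by
      simpa using hlip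
    have hdiff : F (x + z) y - F x y
        = (gy (x + z) - gy x) / (2 * |y| ^ (1 + α)) * Wfun β y := by
      simp only [hFdef, hgy]
      rw [← sub_mul, div_sub_div_same]
    rw [hdiff]
    have hb := bound_aux hlip' (by positivity : (0:ℝ) ≤ 2 * |y| ^ (1 + α))
      (Wfun_nonneg hβ' y)
    refine hb.trans (le_of_eq ?_)
    simp only [hGGdef]
    unfold Gmin
    ring
  -- integrability of the majorant
  have hGGint : Integrable GG :=
    integrable_of_even_Ioi (Gmin_even α (M3 / 2) (2 * M2))
      (integrableOn_Ioi_Gmin hα1 hα2 (by positivity) (by positivity))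
  have hWG : Integrable (fun y => Wfun β y * GG y) :=
    hGGint.bdd_mul (Wfun_measurable β).aestronglyMeasurable
      (c := 2) (Filter.Eventually.of_forall fun y => by
        rw [Real.norm_eq_abs, abs_of_nonneg (Wfun_nonneg hβ' y)]
        exact Wfun_le_two hβ' y)
  have hH : Integrable (fun y => |z| * (Wfun β y * GG y) / 2) :=
    (hWG.const_mul _).div_const _
  -- main estimate
  have key : |∫ y, (F (x + z) y - F x y)| ≤ ∫ y, |z| * (Wfun β y * GG y) / 2 := by
    rw [← Real.norm_eq_abs]
    exact norm_integral_le_of_norm_le hH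
      (Filter.Eventually.of_forall fun y => by rw [Real.norm_eq_abs]; exact hΔ y)
  have hIval : ∫ y, |z| * (Wfun β y * GG y) / 2
      = |z| / 2 * ∫ y, Wfun β y * GG y := by
    rw [integral_div, integral_const_mul]
    ring
  have hsum := integral_W_mul hβ' hGGint (Gmin_even α (M3 / 2) (2 * M2))
  have hIle := integral_Ioi_Gmin_le (A := M3 / 2) (B := 2 * M2) hα1 hα2
    (by positivity) (by positivity)
  have habs0 : 0 ≤ |z| := abs_nonneg z
  have key2 : |∫ y, (F (x + z) y - F x y)|
      ≤ |z| / 2 * (2 * ((M3 / 2) / (2 - α) + (2 * M2) / (α - 1))) := by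
    refine (key.trans (le_of_eq hIval)).trans ?_
    rw [hsum]
    apply mul_le_mul_of_nonneg_left _ (by positivity)
    exact mul_le_mul_of_nonneg_left hIle (by norm_num)
  rw [hLop (x + z), hLop x, ← mul_sub, ← integral_sub (hFint (x + z)) (hFint x)]
  rw [abs_mul, abs_of_nonneg (dcoef_nonneg α)]
  have hfinal : dcoef α * (|z| / 2 * (2 * ((M3 / 2) / (2 - α) + (2 * M2) / (α - 1))))
      = (2 * dcoef α * M2 / (α - 1) + dcoef α * M3 / (2 * (2 - α))) * |z| := by
    have e1 : (2:ℝ) - α ≠ 0 := by intro h; nlinarith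
    have e2 : α - 1 ≠ 0 := by intro h; nlinarith
    field_simp
    ring
  calc dcoef α * |∫ y, (F (x + z) y - F x y)|
      ≤ dcoef α * (|z| / 2 * (2 * ((M3 / 2) / (2 - α) + (2 * M2) / (α - 1)))) :=
        mul_le_mul_of_nonneg_left key2 (dcoef_nonneg α)
    _ = _ := hfinal
end

section
/- Let α = 1 and C > 0. Suppose for each s ∈ (0,1] the random variable Ŷ_s has a density p(s,·) with p(s,y) ≤ C s^{−1}(1 ∧ s^2/|y|^2). Then for any a ∈ (0,1), ∫_0^1 E[|Ŷ_s|·1_{|Ŷ_s| ≤ a^{−1}}] ds ≤ C'(1 + log(a^{−1})) for a constant C' depending only on C. -/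
open MeasureTheory Set

lemma aux_maj_key {s : ℝ} (hs : 0 < s) :
    ∀ y : ℝ, (s^2+y^2)⁻¹ = s⁻¹*s⁻¹*(1+(s⁻¹*y)^2)⁻¹ := by
  intro y
  have h1 : s^2 + y^2 > 0 := by positivity
  have h2 : 1 + (s⁻¹*y)^2 > 0 := by positivity
  field_simp

lemma aux_maj_integrable {s : ℝ} (hs : 0 < s) (c : ℝ) :
    Integrable (fun y : ℝ => c * (s^2+y^2)⁻¹) := by
  have h1 : Integrable (fun y : ℝ => (1+(s⁻¹*y)^2)⁻¹) :=
    integrable_inv_one_add_sq.comp_mul_left' (inv_ne_zero hs.ne')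
  exact (h1.const_mul (c * (s⁻¹*s⁻¹))).congr
    (Filter.Eventually.of_forall fun y => by simp only [aux_maj_key hs]; ring)

lemma aux_maj_integral {s : ℝ} (hs : 0 < s) (c : ℝ) :
    ∫ y : ℝ, c * (s^2+y^2)⁻¹ = c * s⁻¹ * Real.pi := by
  simp_rw [aux_maj_key hs]
  rw [MeasureTheory.integral_const_mul, MeasureTheory.integral_const_mul]
  have := MeasureTheory.Measure.integral_comp_mul_left (fun x : ℝ => (1+x^2)⁻¹) s⁻¹
  rw [this, integral_univ_inv_one_add_sq, inv_inv, abs_of_pos hs, smul_eq_mul]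
  field_simp

lemma aux_min_le {s : ℝ} (hs : 0 < s) (y : ℝ) :
    min 1 (s^2/y^2) ≤ 2*s^2*(s^2+y^2)⁻¹ := by
  rcases le_total (y^2) (s^2) with h | h
  · refine le_trans (min_le_left _ _) ?_
    rw [← div_eq_mul_inv, le_div_iff₀ (by positivity : (0:ℝ) < s^2+y^2)]
    nlinarith
  · refine le_trans (min_le_right _ _) ?_
    rcases eq_or_lt_of_le (sq_nonneg y) with h0 | h0
    · rw [← h0]; simp; positivity
    · rw [← div_eq_mul_inv, div_le_div_iff₀ h0 (by positivity : (0:ℝ) < s^2+y^2)]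
      nlinarith

lemma aux_intOn_inv_sq {a b : ℝ} (h : (0:ℝ) ∉ Set.uIcc a b) :
    IntegrableOn (fun y : ℝ => (y^2)⁻¹) (Set.Ioc a b) := by
  have : IntervalIntegrable (fun y : ℝ => (y:ℝ) ^ (-2 : ℤ)) volume a b :=
    intervalIntegral.intervalIntegrable_zpow (Or.inr h)
  rcases le_total a b with hab | hab
  · have := (intervalIntegrable_iff_integrableOn_Ioc_of_le hab).1 this
    simpa [zpow_neg] using this
  · simp [Set.Ioc_eq_empty (not_lt.2 hab)]

lemma aux_int_inv_sq {a b : ℝ} (hab : a ≤ b) (h : (0:ℝ) ∉ Set.uIcc a b) :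
    ∫ y in Set.Ioc a b, (y^2)⁻¹ = a⁻¹ - b⁻¹ := by
  rw [← intervalIntegral.integral_of_le hab]
  have : ∀ y : ℝ, (y^2)⁻¹ = y ^ (-2 : ℤ) := fun y => by
    rw [zpow_neg]; norm_cast
  simp_rw [this]
  rw [integral_zpow (Or.inr ⟨by norm_num, h⟩)]
  have ha : a ≠ 0 := fun h' => h (h' ▸ Set.left_mem_uIcc)
  have hb : b ≠ 0 := fun h' => h (h' ▸ Set.right_mem_uIcc)
  norm_num
  ring

lemma aux_inner {C s M : ℝ} (hC : 0 < C) (hs : 0 < s) (hs1 : s ≤ 1) (hM : 1 < M)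
    {Ω : Type} [MeasureSpace Ω] [IsProbabilityMeasure (volume : Measure Ω)]
    (Y : Ω → ℝ) (p : ℝ → ℝ)
    (hdens : ∀ A : Set ℝ, MeasurableSet A → (volume {ω | Y ω ∈ A}).toReal = ∫ y in A, p y)
    (hp0 : ∀ y, 0 ≤ p y)
    (hpb : ∀ y, p y ≤ C * s⁻¹ * min 1 (s^2/y^2)) :
    (∫ ω, Set.indicator {ω | |Y ω| ≤ M} (fun ω => |Y ω|) ω) ≤
      8*C*s + 4*C*s*(Real.log M - Real.log s) := by
  have hlogM : 0 ≤ Real.log M := Real.log_nonneg hM.le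
  have hlogs : Real.log s ≤ 0 := Real.log_nonpos hs.le hs1
  have hRHS : 0 ≤ 8*C*s + 4*C*s*(Real.log M - Real.log s) := by
    have h1 : 0 ≤ 4*C*s*(Real.log M - Real.log s) := by
      apply mul_nonneg (by positivity); linarith
    nlinarith
  set g : Ω → ℝ := fun ω => Set.indicator {ω | |Y ω| ≤ M} (fun ω => |Y ω|) ω with hg
  by_cases hint : Integrable g
  swap
  · rw [integral_undef hint]; exact hRHS
  have gnn : ∀ ω, 0 ≤ g ω := fun ω =>
    Set.indicator_nonneg (fun ω _ => abs_nonneg _) ω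
  rw [hint.integral_eq_integral_meas_lt (Filter.Eventually.of_forall gnn)]
  set maj : ℝ → ℝ := fun y => (2*C*s) * (s^2+y^2)⁻¹ with hmaj
  have hmaj_int : Integrable maj := aux_maj_integrable hs _
  have hmaj_nn : ∀ y, 0 ≤ maj y := fun y => by
    simp only [hmaj]; positivity
  have hpmaj : ∀ y, p y ≤ maj y := by
    intro y
    refine (hpb y).trans ?_
    have h1 := aux_min_le hs y
    have h2 : C * s⁻¹ * min 1 (s^2/y^2) ≤ C * s⁻¹ * (2*s^2*(s^2+y^2)⁻¹) :=
      mul_le_mul_of_nonneg_left h1 (by positivity)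
    refine h2.trans_eq ?_
    simp only [hmaj]
    field_simp
  set G : ℝ → ℝ := fun t => (Set.Ioc (0:ℝ) s).indicator (fun _ => 8*C) t
      + (Set.Ioc s M).indicator (fun t => 4*C*s*t⁻¹) t with hG
  have hGnn : ∀ t, 0 ≤ G t := by
    intro t
    apply add_nonneg
    · exact Set.indicator_nonneg (fun _ _ => by positivity) t
    · refine Set.indicator_nonneg (fun x hx => ?_) t
      have : 0 < x := lt_of_lt_of_le hs (le_of_lt hx.1)
      positivity
  -- pointwise tail bound
  have key : ∀ t ∈ Set.Ioi (0:ℝ), (volume {ω | t < g ω}).toReal ≤ G t := by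
    intro t ht
    simp only [Set.mem_Ioi] at ht
    have hset : {ω | t < g ω} = {ω | Y ω ∈ {y : ℝ | t < |y| ∧ |y| ≤ M}} := by
      ext ω
      simp only [Set.mem_setOf_eq, hg, Set.indicator_apply, Set.mem_setOf_eq]
      split_ifs with h
      · constructor
        · intro h0; exact ⟨h0, h⟩
        · intro h0; exact h0.1
      · constructor
        · intro h0; linarith
        · intro h0; exact absurd h0.2 h
    have hAmeas : MeasurableSet {y : ℝ | t < |y| ∧ |y| ≤ M} := by
      have : {y : ℝ | t < |y| ∧ |y| ≤ M} = {y : ℝ | t < |y|} ∩ {y : ℝ | |y| ≤ M} := rfl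
      rw [this]
      exact (measurableSet_lt measurable_const continuous_abs.measurable).inter
        (measurableSet_le continuous_abs.measurable measurable_const)
    rw [hset, hdens _ hAmeas]
    rcases le_or_gt t M with htM | htM
    · have h1 : (∫ y in {y : ℝ | t < |y| ∧ |y| ≤ M}, p y) ≤
          ∫ y in {y : ℝ | t < |y| ∧ |y| ≤ M}, maj y :=
        integral_mono_of_nonneg (Filter.Eventually.of_forall hp0)
          hmaj_int.integrableOn (Filter.Eventually.of_forall hpmaj)
      refine h1.trans ?_
      rcases le_or_gt t s with hts | hts
      · -- t ≤ s : flat bound 8C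
        have h2 : (∫ y in {y : ℝ | t < |y| ∧ |y| ≤ M}, maj y) ≤ ∫ y, maj y :=
          setIntegral_le_integral hmaj_int (Filter.Eventually.of_forall hmaj_nn)
        have h3 : (∫ y, maj y) = 2*C*s * s⁻¹ * Real.pi := aux_maj_integral hs _
        have h4 : 2*C*s * s⁻¹ * Real.pi ≤ 8*C := by
          rw [mul_assoc (2*C), mul_inv_cancel₀ hs.ne', mul_one]
          nlinarith [Real.pi_le_four]
        have h5 : 0 ≤ (Set.Ioc s M).indicator (fun t => 4*C*s*t⁻¹) t := by
          refine Set.indicator_nonneg (fun x hx => ?_) t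
          have : 0 < x := lt_of_lt_of_le hs (le_of_lt hx.1)
          positivity
        have hGt : G t = 8*C + (Set.Ioc s M).indicator (fun t => 4*C*s*t⁻¹) t := by
          simp only [hG]
          rw [Set.indicator_of_mem (Set.mem_Ioc.2 ⟨ht, hts⟩)]
        rw [hGt]
        linarith
      · -- s < t ≤ M : tail bound
        have hsplit : {y : ℝ | t < |y| ∧ |y| ≤ M}
            = Set.Ico (-M) (-t) ∪ Set.Ioc t M := by
          ext y
          simp only [Set.mem_setOf_eq, Set.mem_union, Set.mem_Ico, Set.mem_Ioc]
          rcases le_or_gt 0 y with h | h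
          · rw [abs_of_nonneg h]
            constructor
            · intro hy; right; exact hy
            · intro hy
              rcases hy with hy | hy
              · exfalso; linarith [hy.2]
              · exact hy
          · rw [abs_of_neg h]
            constructor
            · intro hy; left; exact ⟨by linarith [hy.2], by linarith [hy.1]⟩
            · intro hy
              rcases hy with hy | hy
              · exact ⟨by linarith [hy.2], by linarith [hy.1]⟩
              · exfalso; linarith [hy.1]
        rw [hsplit]
        have hdisj : Disjoint (Set.Ico (-M) (-t)) (Set.Ioc t M) := by
          rw [Set.disjoint_left]
          intro y hy hy'
          have h1 := hy.2; have h2 := hy'.1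
          linarith
        rw [setIntegral_union hdisj measurableSet_Ioc hmaj_int.integrableOn
          hmaj_int.integrableOn]
        have hIocInt : IntegrableOn (fun y : ℝ => (y^2)⁻¹) (Set.Ioc t M) :=
          aux_intOn_inv_sq (Set.notMem_uIcc_of_lt ht (by linarith))
        have hIocInt' : IntegrableOn (fun y : ℝ => (y^2)⁻¹) (Set.Ioc (-M) (-t)) :=
          aux_intOn_inv_sq (Set.notMem_uIcc_of_gt (by linarith) (by linarith))
        have hmono : ∀ y : ℝ, y ≠ 0 → maj y ≤ 2*C*s*(y^2)⁻¹ := by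
          intro y hy
          simp only [hmaj]
          apply mul_le_mul_of_nonneg_left _ (by positivity)
          exact inv_anti₀ (by positivity) (by nlinarith [sq_nonneg s])
        have hbound1 : (∫ y in Set.Ioc t M, maj y) ≤ 2*C*s*(t⁻¹ - M⁻¹) := by
          have := setIntegral_mono_on hmaj_int.integrableOn
            (hIocInt.const_mul (2*C*s)) measurableSet_Ioc
            (fun y hy => hmono y (by have := hy.1; intro h; rw [h] at this; linarith))
          refine this.trans_eq ?_
          rw [MeasureTheory.integral_const_mul,
            aux_int_inv_sq htM (Set.notMem_uIcc_of_lt ht (by linarith))]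
        have hbound2 : (∫ y in Set.Ico (-M) (-t), maj y) ≤ 2*C*s*(t⁻¹ - M⁻¹) := by
          rw [setIntegral_congr_set Ico_ae_eq_Ioc]
          have := setIntegral_mono_on hmaj_int.integrableOn
            (hIocInt'.const_mul (2*C*s)) measurableSet_Ioc
            (fun y hy => hmono y (by have := hy.2; intro h; rw [h] at this; linarith))
          refine this.trans_eq ?_
          rw [MeasureTheory.integral_const_mul,
            aux_int_inv_sq (by linarith) (Set.notMem_uIcc_of_gt (by linarith) (by linarith)),
            inv_neg, inv_neg]
          ring
        have hGt : 4*C*s*t⁻¹ ≤ G t := by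
          simp only [hG]
          rw [Set.indicator_of_mem (Set.mem_Ioc.2 ⟨hts, htM⟩)]
          have := Set.indicator_nonneg (s := Set.Ioc (0:ℝ) s)
            (f := fun _ : ℝ => 8*C) (fun _ _ => by positivity) t
          linarith
        have hMinv : 0 ≤ M⁻¹ := by positivity
        have h9 : 2*C*s*(t⁻¹ - M⁻¹) + 2*C*s*(t⁻¹ - M⁻¹) ≤ 4*C*s*t⁻¹ := by
          nlinarith [mul_nonneg (mul_nonneg hC.le hs.le) hMinv]
        refine (add_le_add hbound2 hbound1).trans ?_
        linarith
    · -- t > M : the set is empty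
      have hempty : {y : ℝ | t < |y| ∧ |y| ≤ M} = ∅ := by
        ext y; simp only [Set.mem_setOf_eq, Set.mem_empty_iff_false, iff_false]
        intro hy; linarith [hy.1, hy.2]
      rw [hempty]
      simp only [Measure.restrict_empty, integral_zero_measure]
      exact hGnn t
  -- integrate the dominating function
  have hi2 : IntegrableOn (fun t : ℝ => 4*C*s*t⁻¹) (Set.Ioc s M) := by
    refine (ContinuousOn.integrableOn_Icc ?_).mono_set Set.Ioc_subset_Icc_self
    exact continuousOn_const.mul (continuousOn_id.inv₀ fun x hx => (hs.trans_le hx.1).ne')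
  have hi1 : Integrable ((Set.Ioc (0:ℝ) s).indicator (fun _ : ℝ => 8*C)) := by
    refine (integrableOn_const measure_Ioc_lt_top.ne).integrable_indicator
      measurableSet_Ioc
  have hGint : Integrable G := by
    exact hi1.add (hi2.integrable_indicator measurableSet_Ioc)
  have hstep : (∫ t in Set.Ioi (0:ℝ), (volume {ω | t < g ω}).toReal) ≤
      ∫ t in Set.Ioi (0:ℝ), G t := by
    refine integral_mono_of_nonneg (Filter.Eventually.of_forall fun t => ENNReal.toReal_nonneg)
      hGint.integrableOn ?_
    exact (ae_restrict_iff' measurableSet_Ioi).2 (Filter.Eventually.of_forall key)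
  refine hstep.trans ?_
  have hsM : s < M := lt_of_le_of_lt hs1 hM
  have hsplitG : (∫ t in Set.Ioi (0:ℝ), G t) =
      (∫ t in Set.Ioi (0:ℝ), (Set.Ioc (0:ℝ) s).indicator (fun _ => 8*C) t)
      + ∫ t in Set.Ioi (0:ℝ), (Set.Ioc s M).indicator (fun t => 4*C*s*t⁻¹) t := by
    simp only [hG]
    exact integral_add hi1.integrableOn
      ((hi2.integrable_indicator measurableSet_Ioc).integrableOn)
  rw [hsplitG]
  have e1 : (∫ t in Set.Ioi (0:ℝ), (Set.Ioc (0:ℝ) s).indicator (fun _ => 8*C) t)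
      = 8*C*s := by
    rw [setIntegral_indicator measurableSet_Ioc,
      Set.inter_eq_self_of_subset_right Set.Ioc_subset_Ioi_self, setIntegral_const,
      Real.volume_real_Ioc_of_le hs.le, smul_eq_mul]
    ring
  have e2 : (∫ t in Set.Ioi (0:ℝ), (Set.Ioc s M).indicator (fun t => 4*C*s*t⁻¹) t)
      = 4*C*s*(Real.log M - Real.log s) := by
    rw [setIntegral_indicator measurableSet_Ioc,
      Set.inter_eq_self_of_subset_right (Set.Ioc_subset_Ioi_self.trans
        (Set.Ioi_subset_Ioi hs.le) : Set.Ioc s M ⊆ Set.Ioi 0)]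
    rw [← intervalIntegral.integral_of_le hsM.le]
    rw [intervalIntegral.integral_const_mul]
    rw [integral_inv (Set.notMem_uIcc_of_lt hs (hs.trans hsM)),
      Real.log_div (by positivity) (ne_of_gt hs)]
  rw [e1, e2]

lemma aux_slog {s : ℝ} (hs : 0 < s) (hs1 : s ≤ 1) : s * (-Real.log s) ≤ 2 := by
  have h0 : (0:ℝ) < s⁻¹ := by positivity
  have h1 : Real.log s⁻¹ = 2 * Real.log (Real.sqrt s⁻¹) := by
    rw [Real.log_sqrt h0.le]; ring
  have h2 : Real.log (Real.sqrt s⁻¹) ≤ Real.sqrt s⁻¹ := by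
    have := Real.log_le_sub_one_of_pos (Real.sqrt_pos.2 h0)
    linarith
  have h3 : -Real.log s ≤ 2 * Real.sqrt s⁻¹ := by
    rw [← Real.log_inv, h1]; linarith
  have h4 : s * (2 * Real.sqrt s⁻¹) = 2 * Real.sqrt s := by
    have hd : s * (√s)⁻¹ = √s := by rw [← div_eq_mul_inv, Real.div_sqrt]
    rw [Real.sqrt_inv]
    nlinarith [hd]
  have h5 : Real.sqrt s ≤ 1 := Real.sqrt_le_one.2 hs1
  have h6 : s * (-Real.log s) ≤ s * (2 * Real.sqrt s⁻¹) :=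
    mul_le_mul_of_nonneg_left h3 hs.le
  rw [h4] at h6
  linarith

/-- Truncated first-moment estimate for a family with the stable heat-kernel bound,
`α = 1` case. -/
theorem truncated_moment_family_bound_one (C : ℝ) (hC : 0 < C) :
    ∃ C' : ℝ, 0 < C' ∧
      ∀ (Ω : Type) [MeasureSpace Ω] [IsProbabilityMeasure (volume : Measure Ω)],
      ∀ (Y : ℝ → Ω → ℝ) (p : ℝ → ℝ → ℝ),
        (∀ s ∈ Set.Ioc (0:ℝ) 1, ∀ A : Set ℝ, MeasurableSet A →
          (volume {ω | Y s ω ∈ A}).toReal = ∫ y in A, p s y) →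
        (∀ s ∈ Set.Ioc (0:ℝ) 1, ∀ y, 0 ≤ p s y) →
        (∀ s ∈ Set.Ioc (0:ℝ) 1, ∀ y : ℝ,
          p s y ≤ C * s⁻¹ * min 1 (s ^ 2 / y ^ 2)) →
        ∀ a ∈ Set.Ioo (0:ℝ) 1,
          (∫ s in Set.Ioc (0:ℝ) 1,
            ∫ ω, Set.indicator {ω | |Y s ω| ≤ a⁻¹} (fun ω => |Y s ω|) ω) ≤
              C' * (1 + Real.log a⁻¹) := by
  refine ⟨16*C, by positivity, ?_⟩
  intro Ω _ _ Y p hdens hp0 hpb a ha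
  obtain ⟨ha0, ha1⟩ := ha
  have hM : 1 < a⁻¹ := one_lt_inv_iff₀.2 ⟨ha0, ha1⟩
  set L := Real.log a⁻¹ with hLdef
  have hL : 0 < L := Real.log_pos hM
  have perS : ∀ s ∈ Set.Ioc (0:ℝ) 1,
      (∫ ω, Set.indicator {ω | |Y s ω| ≤ a⁻¹} (fun ω => |Y s ω|) ω) ≤ 16*C + 4*C*L := by
    intro s hsIoc
    obtain ⟨hs, hs1⟩ := hsIoc
    have h := aux_inner hC hs hs1 hM (Y s) (p s)
      (hdens s ⟨hs, hs1⟩) (hp0 s ⟨hs, hs1⟩) (fun y => hpb s ⟨hs, hs1⟩ y)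
    refine h.trans ?_
    have e : 8*C*s + 4*C*s*(L - Real.log s)
        = 8*C*s + 4*C*(s*L) + 4*C*(s*(-Real.log s)) := by ring
    rw [e]
    have b1 : 8*C*s ≤ 8*C := by nlinarith
    have b2 : 4*C*(s*L) ≤ 4*C*L := by
      have : s*L ≤ L := by nlinarith
      nlinarith
    have b3 : 4*C*(s*(-Real.log s)) ≤ 8*C := by
      have := aux_slog hs hs1
      nlinarith
    linarith
  have innn : ∀ s : ℝ, 0 ≤ ∫ ω, Set.indicator {ω | |Y s ω| ≤ a⁻¹} (fun ω => |Y s ω|) ω :=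
    fun s => integral_nonneg fun ω => Set.indicator_nonneg (fun _ _ => abs_nonneg _) ω
  have step : (∫ s in Set.Ioc (0:ℝ) 1,
      ∫ ω, Set.indicator {ω | |Y s ω| ≤ a⁻¹} (fun ω => |Y s ω|) ω)
      ≤ ∫ _s in Set.Ioc (0:ℝ) 1, (16*C + 4*C*L) := by
    refine integral_mono_of_nonneg (Filter.Eventually.of_forall fun s => innn s)
      (integrable_const _) ?_
    exact (ae_restrict_iff' measurableSet_Ioc).2 (Filter.Eventually.of_forall perS)
  refine step.trans ?_
  rw [setIntegral_const, Real.volume_real_Ioc_of_le zero_le_one, smul_eq_mul]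
  have : 0 ≤ C*L := by positivity
  nlinarith
end

section
/- Smoothing inequality: Let μ and ν be probability measures on ℝ, and suppose ν has a density bounded by a constant M > 0. Suppose there is a constant D > 0 such that |∫ f dμ − ∫ f dν| ≤ D·(‖f‖_∞ + ‖f'‖_∞ + ‖f''‖_∞ + ‖f'''‖_∞) for all f ∈ C_b^3(ℝ). Then the Kolmogorov distance satisfies sup_{x∈ℝ} |μ((−∞,x]) − ν((−∞,x])| ≤ C (D^{1/4} + D) for a constant C depending only on M. -/
open MeasureTheory Set
open scoped ContDiff

private lemma deriv_zero_of_eventually_const {f : ℝ → ℝ} {x c : ℝ}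
    (h : ∀ᶠ y in nhds x, f y = c) : deriv f x = 0 := by
  have : f =ᶠ[nhds x] fun _ => c := h
  rw [this.deriv_eq]
  simp

private lemma deriv_zero_on_Iio {f : ℝ → ℝ} {a c : ℝ} (h : ∀ x < a, f x = c) :
    ∀ x < a, deriv f x = 0 := by
  intro x hx
  exact deriv_zero_of_eventually_const (c := c)
    (by filter_upwards [Iio_mem_nhds hx] with y hy using h y hy)

private lemma deriv_zero_on_Ioi {f : ℝ → ℝ} {a c : ℝ} (h : ∀ x, a < x → f x = c) :
    ∀ x, a < x → deriv f x = 0 := by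
  intro x hx
  exact deriv_zero_of_eventually_const (c := c)
    (by filter_upwards [Ioi_mem_nhds hx] with y hy using h y hy)

private lemma exists_bound_of_cont {h : ℝ → ℝ} (hc : Continuous h)
    (h0 : ∀ x < (0:ℝ), h x = 0) (h1 : ∀ x, (1:ℝ) < x → h x = 0) :
    ∃ K, 0 ≤ K ∧ ∀ x, |h x| ≤ K := by
  obtain ⟨K, hK⟩ := (isCompact_Icc (a := (0:ℝ)) (b := 1)).exists_bound_of_continuousOn
    hc.continuousOn
  refine ⟨max K 0, le_max_right _ _, fun x => ?_⟩
  rcases lt_or_ge x 0 with hx | hx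
  · simp [h0 x hx, le_max_right]
  rcases le_or_gt x 1 with hx1 | hx1
  · exact le_max_of_le_left (by simpa using hK x ⟨hx, hx1⟩)
  · simp [h1 x hx1, le_max_right]

private lemma deriv_comp_affine {h : ℝ → ℝ} (hh : Differentiable ℝ h) (a b : ℝ) :
    (deriv fun y => h (a + b * y)) = fun y => b * deriv h (a + b * y) := by
  funext y
  have h1 : HasDerivAt (fun y : ℝ => a + b * y) b y := by
    simpa using ((hasDerivAt_id y).const_mul b).const_add a
  have h2 : HasDerivAt (fun y => h (a + b * y)) (deriv h (a + b * y) * b) y :=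
    (hh (a + b * y)).hasDerivAt.comp y h1
  simpa [mul_comm] using h2.deriv

private lemma deriv_comp_affine_const_mul {h : ℝ → ℝ} (hh : Differentiable ℝ h) (c a b : ℝ) :
    (deriv fun y => c * h (a + b * y)) = fun y => c * b * deriv h (a + b * y) := by
  funext y
  have h1 : HasDerivAt (fun y : ℝ => a + b * y) b y := by
    simpa using ((hasDerivAt_id y).const_mul b).const_add a
  have h2 : HasDerivAt (fun y => h (a + b * y)) (deriv h (a + b * y) * b) y :=
    (hh (a + b * y)).hasDerivAt.comp y h1
  have h3 := h2.const_mul c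
  simpa [mul_assoc, mul_comm, mul_left_comm] using h3.deriv

/-- A continuous function squeezed between the indicators of `Iic t` and `Iic s` has integral
between the measures. -/
private lemma sandwich (κ : Measure ℝ) [IsProbabilityMeasure κ] {f : ℝ → ℝ}
    (hfc : Continuous f) (hf0 : ∀ y, 0 ≤ f y) (hf1 : ∀ y, f y ≤ 1) {t s : ℝ}
    (hone : ∀ y ≤ t, f y = 1) (hzero : ∀ y, s ≤ y → f y = 0) :
    (κ (Iic t)).toReal ≤ ∫ y, f y ∂κ ∧ (∫ y, f y ∂κ) ≤ (κ (Iic s)).toReal := by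
  have hint : Integrable f κ := by
    refine Integrable.mono' (integrable_const 1) hfc.aestronglyMeasurable ?_
    exact Filter.Eventually.of_forall fun y => by
      rw [Real.norm_eq_abs, abs_of_nonneg (hf0 y)]; exact hf1 y
  constructor
  · have := integral_indicator_one (μ := κ) (measurableSet_Iic (a := t))
    rw [← measureReal_def, ← this]
    refine integral_mono ((integrable_const (1:ℝ)).indicator measurableSet_Iic) hint ?_
    intro y
    by_cases hy : y ∈ Iic t
    · simp [indicator_of_mem hy, hone y hy]
    · simp only [indicator_of_notMem hy]
      exact hf0 y
  · have := integral_indicator_one (μ := κ) (measurableSet_Iic (a := s))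
    rw [← measureReal_def, ← this]
    refine integral_mono hint ((integrable_const (1:ℝ)).indicator measurableSet_Iic) ?_
    intro y
    by_cases hy : y ∈ Iic s
    · simp only [indicator_of_mem hy]
      exact le_trans (hf1 y) (by norm_num)
    · rw [indicator_of_notMem hy, hzero y (le_of_lt (not_le.mp hy))]

/-- Smoothing inequality: a smooth-Wasserstein-type bound of size `D` plus a bounded
density for `ν` give a Kolmogorov-distance bound `C (D^{1/4} + D)`. -/
theorem smoothing_inequality (M : ℝ) (hM : 0 < M) :
    ∃ C : ℝ, 0 < C ∧
      ∀ (μ ν : Measure ℝ), IsProbabilityMeasure μ → IsProbabilityMeasure ν →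
      ∀ (p : ℝ → ℝ), (∀ s : Set ℝ, MeasurableSet s → (ν s).toReal = ∫ x in s, p x) →
        (∀ x, 0 ≤ p x) → (∀ x, p x ≤ M) →
      ∀ D : ℝ, 0 < D →
        (∀ f : ℝ → ℝ, ContDiff ℝ 3 f →
          ∀ M0 M1 M2 M3 : ℝ,
            (∀ x, |f x| ≤ M0) → (∀ x, |deriv f x| ≤ M1) →
            (∀ x, |deriv (deriv f) x| ≤ M2) → (∀ x, |deriv (deriv (deriv f)) x| ≤ M3) →
            |(∫ x, f x ∂μ) - ∫ x, f x ∂ν| ≤ D * (M0 + M1 + M2 + M3)) →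
        ∀ x : ℝ, |(μ (Set.Iic x)).toReal - (ν (Set.Iic x)).toReal| ≤
          C * (D ^ ((1:ℝ)/4) + D) := by
  classical
  set g : ℝ → ℝ := Real.smoothTransition with hgdef
  have hg : ContDiff ℝ ∞ g := Real.smoothTransition.contDiff
  have hg1 : ContDiff ℝ ∞ (deriv g) := (contDiff_infty_iff_deriv.mp hg).2
  have hg2 : ContDiff ℝ ∞ (deriv (deriv g)) := (contDiff_infty_iff_deriv.mp hg1).2
  have hg3 : ContDiff ℝ ∞ (deriv (deriv (deriv g))) := (contDiff_infty_iff_deriv.mp hg2).2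
  -- vanishing of derivatives outside (0,1)
  have hg_lt0 : ∀ x < (0:ℝ), g x = 0 := fun x hx => Real.smoothTransition.zero_of_nonpos hx.le
  have hg_gt1 : ∀ x, (1:ℝ) < x → g x = 1 := fun x hx => Real.smoothTransition.one_of_one_le hx.le
  have hd1_lt0 : ∀ x < (0:ℝ), deriv g x = 0 := deriv_zero_on_Iio hg_lt0
  have hd1_gt1 : ∀ x, (1:ℝ) < x → deriv g x = 0 := deriv_zero_on_Ioi hg_gt1
  have hd2_lt0 : ∀ x < (0:ℝ), deriv (deriv g) x = 0 := deriv_zero_on_Iio hd1_lt0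
  have hd2_gt1 : ∀ x, (1:ℝ) < x → deriv (deriv g) x = 0 := deriv_zero_on_Ioi hd1_gt1
  have hd3_lt0 : ∀ x < (0:ℝ), deriv (deriv (deriv g)) x = 0 := deriv_zero_on_Iio hd2_lt0
  have hd3_gt1 : ∀ x, (1:ℝ) < x → deriv (deriv (deriv g)) x = 0 := deriv_zero_on_Ioi hd2_gt1
  obtain ⟨K1, hK1n, hK1⟩ := exists_bound_of_cont hg1.continuous hd1_lt0 hd1_gt1
  obtain ⟨K2, hK2n, hK2⟩ := exists_bound_of_cont hg2.continuous hd2_lt0 hd2_gt1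
  obtain ⟨K3, hK3n, hK3⟩ := exists_bound_of_cont hg3.continuous hd3_lt0 hd3_gt1
  refine ⟨M + 1 + K1 + K2 + K3, by linarith, ?_⟩
  intro μ ν hμ hν p hp hp0 hpM D hD hsmooth x
  set ε : ℝ := D ^ ((1:ℝ)/4) with hεdef
  have hε : 0 < ε := Real.rpow_pos_of_pos hD _
  -- the scaled cutoff family
  set b : ℝ := -(1/ε) with hbdef
  have hb_abs : |b| = 1/ε := by
    rw [hbdef, abs_neg, abs_of_pos (by positivity)]
  -- density step: ν(Iic (t+ε)) ≤ ν(Iic t) + M ε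
  have hdensity : ∀ t : ℝ, (ν (Iic (t + ε))).toReal ≤ (ν (Iic t)).toReal + M * ε := by
    intro t
    have hsplit : Iic t ∪ Ioc t (t + ε) = Iic (t + ε) :=
      Iic_union_Ioc_eq_Iic (by linarith)
    have hmeas : ν (Iic (t + ε)) = ν (Iic t) + ν (Ioc t (t + ε)) := by
      rw [← hsplit, measure_union (Iic_disjoint_Ioc le_rfl) measurableSet_Ioc]
    have hre : (ν (Iic (t + ε))).toReal = (ν (Iic t)).toReal + (ν (Ioc t (t + ε))).toReal := by
      rw [hmeas, ENNReal.toReal_add (measure_ne_top ν _) (measure_ne_top ν _)]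
    rw [hre]
    have hioc : (ν (Ioc t (t + ε))).toReal ≤ M * ε := by
      rw [hp _ measurableSet_Ioc]
      by_cases hint : IntegrableOn p (Ioc t (t + ε))
      · have h1 : (∫ y in Ioc t (t + ε), p y) ≤ ∫ _ in Ioc t (t + ε), M := by
          refine integral_mono hint ?_ fun y => hpM y
          exact integrableOn_const measure_Ioc_lt_top.ne
        have h2 : (∫ _ in Ioc t (t + ε), M) = M * ε := by
          rw [setIntegral_const, measureReal_def, Real.volume_Ioc, smul_eq_mul]
          rw [ENNReal.toReal_ofReal (by linarith)]
          ring_nf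
        linarith [h1, h2.symm ▸ h1]
      · rw [integral_undef hint]
        positivity
    linarith
  -- main two-sided estimate via cutoffs at t and t - ε
  have hmain : ∀ t : ℝ,
      (μ (Iic t)).toReal ≤ (∫ y, g ((t + ε) / ε + b * y) ∂μ) ∧
      (∫ y, g ((t + ε) / ε + b * y) ∂μ) ≤ (μ (Iic (t + ε))).toReal ∧
      (ν (Iic t)).toReal ≤ (∫ y, g ((t + ε) / ε + b * y) ∂ν) ∧
      (∫ y, g ((t + ε) / ε + b * y) ∂ν) ≤ (ν (Iic (t + ε))).toReal ∧
      |(∫ y, g ((t + ε) / ε + b * y) ∂μ) - ∫ y, g ((t + ε) / ε + b * y) ∂ν| ≤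
        D * (1 + (1/ε) * K1 + (1/ε)^2 * K2 + (1/ε)^3 * K3) := by
    intro t
    set a : ℝ := (t + ε) / ε with hadef
    have harg : ∀ y : ℝ, a + b * y = (t + ε - y) / ε := by
      intro y; rw [hadef, hbdef]; field_simp; ring
    have hone : ∀ y ≤ t, g (a + b * y) = 1 := by
      intro y hy
      apply Real.smoothTransition.one_of_one_le
      rw [harg y, le_div_iff₀ hε]
      linarith
    have hzero : ∀ y, t + ε ≤ y → g (a + b * y) = 0 := by
      intro y hy
      apply Real.smoothTransition.zero_of_nonpos
      rw [harg y]
      apply div_nonpos_of_nonpos_of_nonneg (by linarith) hε.le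
    have hcont : Continuous fun y => g (a + b * y) :=
      Real.smoothTransition.continuous.comp
        (continuous_const.add (continuous_const.mul continuous_id))
    have hf0 : ∀ y, 0 ≤ g (a + b * y) := fun y => Real.smoothTransition.nonneg _
    have hf1 : ∀ y, g (a + b * y) ≤ 1 := fun y => Real.smoothTransition.le_one _
    have hμs := sandwich μ hcont hf0 hf1 hone hzero
    have hνs := sandwich ν hcont hf0 hf1 hone hzero
    refine ⟨hμs.1, hμs.2, hνs.1, hνs.2, ?_⟩
    -- derivative computations
    have hD1 : (deriv fun y => g (a + b * y)) = fun y => b * deriv g (a + b * y) :=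
      deriv_comp_affine ((contDiff_infty_iff_deriv.mp hg).1) a b
    have hD2 : (deriv (deriv fun y => g (a + b * y))) =
        fun y => b * b * deriv (deriv g) (a + b * y) := by
      rw [hD1]
      exact deriv_comp_affine_const_mul ((contDiff_infty_iff_deriv.mp hg1).1) b a b
    have hD3 : (deriv (deriv (deriv fun y => g (a + b * y)))) =
        fun y => b * b * b * deriv (deriv (deriv g)) (a + b * y) := by
      rw [hD2]
      simpa [mul_assoc] using
        deriv_comp_affine_const_mul ((contDiff_infty_iff_deriv.mp hg2).1) (b * b) a b
    have hcd : ContDiff ℝ 3 fun y => g (a + b * y) := by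
      refine (Real.smoothTransition.contDiff (n:=3)).comp ?_
      exact contDiff_const.add (contDiff_const.mul contDiff_id)
    have bnd0 : ∀ y, |g (a + b * y)| ≤ 1 := fun y => by
      rw [abs_of_nonneg (hf0 y)]; exact hf1 y
    have bnd1 : ∀ y, |deriv (fun y => g (a + b * y)) y| ≤ (1/ε) * K1 := by
      intro y
      rw [hD1, abs_mul, hb_abs]
      exact mul_le_mul_of_nonneg_left (hK1 _) (by positivity)
    have bnd2 : ∀ y, |deriv (deriv fun y => g (a + b * y)) y| ≤ (1/ε)^2 * K2 := by
      intro y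
      rw [hD2, abs_mul, abs_mul, hb_abs]
      calc 1/ε * (1/ε) * |deriv (deriv g) (a + b * y)| ≤ 1/ε * (1/ε) * K2 :=
            mul_le_mul_of_nonneg_left (hK2 _) (by positivity)
        _ = (1/ε)^2 * K2 := by ring
    have bnd3 : ∀ y, |deriv (deriv (deriv fun y => g (a + b * y))) y| ≤ (1/ε)^3 * K3 := by
      intro y
      rw [hD3, abs_mul, abs_mul, abs_mul, hb_abs]
      calc 1/ε * (1/ε) * (1/ε) * |deriv (deriv (deriv g)) (a + b * y)|
          ≤ 1/ε * (1/ε) * (1/ε) * K3 := mul_le_mul_of_nonneg_left (hK3 _) (by positivity)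
        _ = (1/ε)^3 * K3 := by ring
    exact hsmooth _ hcd 1 ((1/ε) * K1) ((1/ε)^2 * K2) ((1/ε)^3 * K3) bnd0 bnd1 bnd2 bnd3
  set z : ℝ := D * (1 + (1/ε) * K1 + (1/ε)^2 * K2 + (1/ε)^3 * K3) with hzdef
  -- two-sided estimate of the Kolmogorov distance
  have hupper : (μ (Iic x)).toReal - (ν (Iic x)).toReal ≤ M * ε + z := by
    obtain ⟨h1, _, _, h4, h5⟩ := hmain x
    have h6 := hdensity x
    have := abs_sub_le_iff.mp h5
    linarith [this.1]
  have hlower : (ν (Iic x)).toReal - (μ (Iic x)).toReal ≤ M * ε + z := by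
    obtain ⟨_, h2, h3, _, h5⟩ := hmain (x - ε)
    have h6 := hdensity (x - ε)
    rw [sub_add_cancel] at h6 h2 h5 h3
    have := abs_sub_le_iff.mp h5
    linarith [this.2]
  have habs : |(μ (Iic x)).toReal - (ν (Iic x)).toReal| ≤ M * ε + z :=
    abs_sub_le_iff.mpr ⟨hupper, hlower⟩
  refine le_trans habs ?_
  -- arithmetic: M ε + z ≤ C (D^{1/4} + D)
  have hinv : 1/ε = D ^ (-(1/4 : ℝ)) := by
    rw [hεdef, one_div, ← Real.rpow_neg hD.le]
  have hmul1 : D * (1/ε) = D ^ ((3:ℝ)/4) := by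
    rw [hinv]
    nth_rewrite 1 [← Real.rpow_one D]
    rw [← Real.rpow_add hD]
    norm_num
  have hmul2 : D * (1/ε)^2 = D ^ ((1:ℝ)/2) := by
    rw [hinv, ← Real.rpow_natCast (D ^ (-(1/4:ℝ))), ← Real.rpow_mul hD.le]
    nth_rewrite 1 [← Real.rpow_one D]
    rw [← Real.rpow_add hD]
    norm_num
  have hmul3 : D * (1/ε)^3 = D ^ ((1:ℝ)/4) := by
    rw [hinv, ← Real.rpow_natCast (D ^ (-(1/4:ℝ))), ← Real.rpow_mul hD.le]
    nth_rewrite 1 [← Real.rpow_one D]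
    rw [← Real.rpow_add hD]
    norm_num
  have hcmp : ∀ e : ℝ, 1/4 ≤ e → e ≤ 1 → D ^ e ≤ D ^ ((1:ℝ)/4) + D := by
    intro e he1 he2
    rcases le_or_gt D 1 with h | h
    · have := Real.rpow_le_rpow_of_exponent_ge hD h he1
      linarith [hD.le]
    · have h' := Real.rpow_le_rpow_of_exponent_le h.le he2
      rw [Real.rpow_one] at h'
      have h4 : 0 ≤ D ^ ((1:ℝ)/4) := (Real.rpow_pos_of_pos hD _).le
      linarith
  have h34 : D ^ ((3:ℝ)/4) ≤ D ^ ((1:ℝ)/4) + D := hcmp _ (by norm_num) (by norm_num)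
  have h12 : D ^ ((1:ℝ)/2) ≤ D ^ ((1:ℝ)/4) + D := hcmp _ (by norm_num) (by norm_num)
  have h14 : D ^ ((1:ℝ)/4) ≤ D ^ ((1:ℝ)/4) + D := by linarith [hD.le]
  have hDle : D ≤ D ^ ((1:ℝ)/4) + D := by
    linarith [(Real.rpow_pos_of_pos hD ((1:ℝ)/4)).le]
  have hz : z = D + K1 * (D ^ ((3:ℝ)/4)) + K2 * (D ^ ((1:ℝ)/2)) + K3 * (D ^ ((1:ℝ)/4)) := by
    rw [hzdef, ← hmul1, ← hmul2, ← hmul3]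
    ring
  have hMε : M * ε = M * (D ^ ((1:ℝ)/4)) := by rw [hεdef]
  rw [hz, hMε]
  have t1 : M * (D ^ ((1:ℝ)/4)) ≤ M * (D ^ ((1:ℝ)/4) + D) :=
    mul_le_mul_of_nonneg_left h14 hM.le
  have t2 : K1 * (D ^ ((3:ℝ)/4)) ≤ K1 * (D ^ ((1:ℝ)/4) + D) :=
    mul_le_mul_of_nonneg_left h34 hK1n
  have t3 : K2 * (D ^ ((1:ℝ)/2)) ≤ K2 * (D ^ ((1:ℝ)/4) + D) :=
    mul_le_mul_of_nonneg_left h12 hK2n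
  have t4 : K3 * (D ^ ((1:ℝ)/4)) ≤ K3 * (D ^ ((1:ℝ)/4) + D) :=
    mul_le_mul_of_nonneg_left h14 hK3n
  nlinarith [hDle]
end
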